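/- Let G be a 3-regular graph on 10 vertices with 15 edges, and let C = δ(X) be an edge cut with |X| = |X̄| = 5 such that both induced subgraphs G[X] and G[X̄] are 5-cycles and |C| = 5. If G contains no 4-cycle intersecting C in exactly two edges, then G is isomorphic to the Petersen graph. -/

import Mathlib

open Classical Finset

noncomputable section

namespace PaperPM

variable {V : Type} [Fintype V] [DecidableEq V]

/-- `M` is (the edge set of) a perfect matching of `G`. -/
def IsPM (G : SimpleGraph V) (M : Finset (Sym2 V)) : Prop :=
  (M : Set (Sym2 V)) ⊆ G.edgeSet ∧ ∀ v : V, ∃! e, e ∈ M ∧ v ∈ e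

/-- `G` is matching-covered: every edge lies in a perfect matching. -/
def MatchingCovered (G : SimpleGraph V) : Prop :=
  ∀ e ∈ G.edgeSet, ∃ M, IsPM G M ∧ e ∈ M

/-- incidence (indicator) vector of a set of edges -/
def indVec (M : Finset (Sym2 V)) : Sym2 V → ℝ := fun e => if e ∈ M then 1 else 0

/-- the perfect matching polytope of `G` -/
def pmPolytope (G : SimpleGraph V) : Set (Sym2 V → ℝ) :=
  convexHull ℝ {x | ∃ M, IsPM G M ∧ x = indVec M}

/-- the cut `δ(X)`: edges of `G` with exactly one endpoint in `X` -/
def cutE (G : SimpleGraph V) (X : Set V) : Finset (Sym2 V) :=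
  Finset.univ.filter fun e =>
    e ∈ G.edgeSet ∧ ∃ u v : V, e = s(u, v) ∧ u ∈ X ∧ v ∉ X

/-- `x(A) = Σ_{a ∈ A} x_a` -/
def edgeSum (x : Sym2 V → ℝ) (A : Finset (Sym2 V)) : ℝ := ∑ e ∈ A, x e

/-- the face `P(G;C) = P(G) ∩ {x : x(δ(X)) = 1}` -/
def faceCut (G : SimpleGraph V) (X : Set V) : Set (Sym2 V → ℝ) :=
  {x ∈ pmPolytope G | edgeSum x (cutE G X) = 1}

/-- `δ(X)` is a tight cut -/
def TightCut (G : SimpleGraph V) (X : Set V) : Prop :=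
  Odd X.toFinset.card ∧ 1 < X.toFinset.card ∧ X.toFinset.card < Fintype.card V - 1 ∧
    ∀ M, IsPM G M → (M ∩ cutE G X).card = 1

/-- a brick: non-bipartite matching-covered graph without tight cuts -/
def IsBrick (G : SimpleGraph V) : Prop :=
  MatchingCovered G ∧ ¬ G.Colorable 2 ∧ ∀ X : Set V, ¬ TightCut G X

/-- dimension of a subset of `ℝ^{Sym2 V}` (affine dimension; `-1` for the empty set) -/
def polyDim (s : Set (Sym2 V → ℝ)) : ℤ :=
  if s = ∅ then -1 else (Module.finrank ℝ (vectorSpan ℝ s) : ℤ)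

/-- number of bricks in a tight cut decomposition of `G`, via the dimension
formula `dim P(G) = |E| − |V| + 1 − b(G)` of Naddef and Edmonds–Pulleyblank–Lovász. -/
def brickCount (G : SimpleGraph V) : ℤ :=
  (G.edgeFinset.card : ℤ) - Fintype.card V + 1 - polyDim (pmPolytope G)

/-- (the edge set of) a perfect matching of the contraction `G/X`, viewed inside `G`:
no edge inside `X`, exactly one cut edge (covering the contraction vertex), and every
vertex outside `X` covered exactly once. This keeps multiple parallel cut edges distinct. -/
def IsPMContr (G : SimpleGraph V) (X : Set V) (M : Finset (Sym2 V)) : Prop :=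
  (M : Set (Sym2 V)) ⊆ G.edgeSet ∧ (∀ e ∈ M, ¬ ∀ v ∈ e, v ∈ X) ∧
    (M ∩ cutE G X).card = 1 ∧ ∀ v : V, v ∉ X → ∃! e, e ∈ M ∧ v ∈ e

/-- the contraction `G/X` is matching-covered (every one of its edges, i.e. every
edge of `G` not inside `X`, lies in a perfect matching of `G/X`). -/
def MatchingCoveredContr (G : SimpleGraph V) (X : Set V) : Prop :=
  ∀ e ∈ G.edgeSet, (¬ ∀ v ∈ e, v ∈ X) → ∃ M, IsPMContr G X M ∧ e ∈ M

/-- `δ(X)` is a separating cut: odd, nontrivial, and both cut-contractions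
`G/X` and `G/X̄` are matching-covered. -/
def SeparatingCut (G : SimpleGraph V) (X : Set V) : Prop :=
  Odd X.toFinset.card ∧ 1 < X.toFinset.card ∧ X.toFinset.card < Fintype.card V - 1 ∧
    MatchingCoveredContr G X ∧ MatchingCoveredContr G Xᶜ

/-- the edges of the contraction `G/X`, as edges of `G` -/
def contrEdges (G : SimpleGraph V) (X : Set V) : Finset (Sym2 V) :=
  G.edgeFinset.filter fun e => ¬ ∀ v ∈ e, v ∈ X

/-- the perfect matching polytope of the contraction `G/X`, in the coordinates of `G` -/
def contrPolytope (G : SimpleGraph V) (X : Set V) : Set (Sym2 V → ℝ) :=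
  convexHull ℝ {x | ∃ M, IsPMContr G X M ∧ x = indVec M}

/-- number of bricks of the contraction `G/X`, via the dimension formula -/
def brickCountContr (G : SimpleGraph V) (X : Set V) : ℤ :=
  (contrEdges G X).card - ((Fintype.card V - X.toFinset.card : ℕ) + 1) + 1 -
    polyDim (contrPolytope G X)

/-- the contraction `G/X` is a Birkhoff–von Neumann graph: its perfect matching
polytope is cut out by nonnegativity, the degree equations, and `x(δ(X)) = 1`. -/
def BvNContr (G : SimpleGraph V) (X : Set V) : Prop :=
  contrPolytope G X =
    {x | (∀ e, 0 ≤ x e) ∧ (∀ e : Sym2 V, (e ∉ G.edgeSet ∨ ∀ v ∈ e, v ∈ X) → x e = 0) ∧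
      (∀ v : V, v ∉ X → edgeSum x (cutE G {v}) = 1) ∧ edgeSum x (cutE G X) = 1}

/-- the contraction `G/X` is bipartite -/
def ContrBipartite (G : SimpleGraph V) (X : Set V) : Prop :=
  ∃ (c : V → Bool) (b : Bool), ∀ u v : V, G.Adj u v → (u ∉ X ∨ v ∉ X) →
    (if u ∈ X then b else c u) ≠ (if v ∈ X then b else c v)

/-- `G` is a Birkhoff–von Neumann graph -/
def BvN (G : SimpleGraph V) : Prop :=
  pmPolytope G =
    {x | (∀ e, 0 ≤ x e) ∧ (∀ e : Sym2 V, e ∉ G.edgeSet → x e = 0) ∧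
      ∀ v : V, edgeSum x (cutE G {v}) = 1}

/-- `F` is a face of the convex set `P` -/
def IsFaceOf {E : Type*} [AddCommGroup E] [Module ℝ E] (P F : Set E) : Prop :=
  F ⊆ P ∧ Convex ℝ F ∧ ∀ x ∈ P, ∀ y ∈ P, ∀ t : ℝ, 0 < t → t < 1 →
    t • x + (1 - t) • y ∈ F → x ∈ F ∧ y ∈ F

/-- a vector is integral if all its coordinates are integers -/
def Integral (x : Sym2 V → ℝ) : Prop := ∀ e, ∃ n : ℤ, x e = (n : ℝ)

/-- the Petersen graph, as the Kneser graph `K(5,2)` -/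
def petersenGraph : SimpleGraph {s : Finset (Fin 5) // s.card = 2} where
  Adj a b := Disjoint (a : Finset (Fin 5)) (b : Finset (Fin 5))
  symm := ⟨fun _ _ h => h.symm⟩
  loopless := ⟨fun a h => by
    have h0 : (a : Finset (Fin 5)) = ∅ := by
      exact disjoint_self.mp h
    have h2 := a.2
    rw [h0] at h2
    simp at h2⟩



/-! ### Auxiliary machinery for `stmt2` -/

/-- adjacency in the 5-cycle, concretely -/
def cAdj (i j : Fin 5) : Prop := i - j = 1 ∨ j - i = 1

instance : DecidableRel cAdj := fun _ _ => inferInstanceAs (Decidable (_ ∨ _))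

lemma cyc5_adj : ∀ u v : Fin 5, (SimpleGraph.cycleGraph 5).Adj u v ↔ cAdj u v := by decide

/-- the abstract graph: two 5-cycles joined by the matching `σ` -/
def Hadj (σ : Fin 5 → Fin 5) : Fin 5 ⊕ Fin 5 → Fin 5 ⊕ Fin 5 → Prop
  | .inl i, .inl j => cAdj i j
  | .inr i, .inr j => cAdj i j
  | .inl i, .inr j => σ i = j
  | .inr j, .inl i => σ i = j

instance (σ : Fin 5 → Fin 5) : DecidableRel (Hadj σ) := fun a b => by
  cases a <;> cases b <;> (dsimp [Hadj]; infer_instance)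

/-- a 2-element subset of `Fin 5` -/
def pv (a d : Fin 5) (hd : d ≠ 0) : {s : Finset (Fin 5) // s.card = 2} :=
  ⟨{a, a + d}, Finset.card_pair (fun h => hd (left_eq_add.mp h))⟩

/-- the explicit isomorphism to the Petersen graph, as a map -/
def Fmap (σ : Fin 5 → Fin 5) : Fin 5 ⊕ Fin 5 → {s : Finset (Fin 5) // s.card = 2}
  | .inl k => pv (2 * k) 1 (by decide)
  | .inr j => if σ 1 - σ 0 = 2 then pv (j + 2 - σ 0) 2 (by decide)
              else pv (σ 0 + 2 - j) 2 (by decide)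

/-- the no-4-cycle condition, combinatorially -/
def cond (σ : Fin 5 → Fin 5) : Prop := ∀ i : Fin 5, ¬ cAdj (σ i) (σ (i + 1))

instance : DecidablePred cond := fun _ => inferInstanceAs (Decidable (∀ _, _))

set_option maxRecDepth 10000 in
lemma keyInj : ∀ σ : Equiv.Perm (Fin 5), cond σ →
    Function.Injective (Fmap σ) := by decide

set_option maxRecDepth 10000 in
lemma keyAdj : ∀ σ : Equiv.Perm (Fin 5), cond σ →
    ∀ a b, Hadj σ a b ↔ Disjoint (Fmap σ a).1 (Fmap σ b).1 := by decide

lemma card_petersen_vertices : Fintype.card {s : Finset (Fin 5) // s.card = 2} = 10 := by decide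

lemma mem_cutE {G : SimpleGraph V} {X : Set V} {e : Sym2 V} :
    e ∈ cutE G X ↔ e ∈ G.edgeSet ∧ ∃ u v, e = s(u, v) ∧ u ∈ X ∧ v ∉ X := by
  simp [cutE]

lemma cyc5_neighbor_card : ∀ k : Fin 5,
    ((SimpleGraph.cycleGraph 5).neighborFinset k).card = 2 := by decide

/-- each vertex of a side that induces a 5-cycle has a unique neighbour on the other side -/
lemma unique_mate (G : SimpleGraph V) [DecidableRel G.Adj] (S : Set V)
    (hreg : ∀ v : V, G.degree v = 3)
    (h : G.induce S ≃g SimpleGraph.cycleGraph 5) (v : V) (hv : v ∈ S) :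
    ∃! w, G.Adj v w ∧ w ∉ S := by
  classical
  have hadj_iff : ∀ a b : ↥S, (SimpleGraph.cycleGraph 5).Adj (h a) (h b) ↔ G.Adj a b :=
    fun a b => h.map_adj_iff
  have himg : (G.neighborFinset v).filter (· ∈ S)
      = ((SimpleGraph.cycleGraph 5).neighborFinset (h ⟨v, hv⟩)).image
          (fun j => ((h.symm j : ↥S) : V)) := by
    ext u
    simp only [Finset.mem_filter, SimpleGraph.mem_neighborFinset, Finset.mem_image]
    constructor
    · rintro ⟨hadj, hu⟩
      refine ⟨h ⟨u, hu⟩, ?_, by rw [h.symm_apply_apply]⟩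
      exact (hadj_iff ⟨v, hv⟩ ⟨u, hu⟩).mpr hadj
    · rintro ⟨j, hj, rfl⟩
      refine ⟨?_, (h.symm j).2⟩
      have := (hadj_iff ⟨v, hv⟩ (h.symm j)).mp (by rwa [h.apply_symm_apply])
      exact this
  have hcard2 : ((G.neighborFinset v).filter (· ∈ S)).card = 2 := by
    have hinj : Function.Injective (fun j : Fin 5 => ((h.symm j : ↥S) : V)) :=
      fun a b hab => h.symm.toEquiv.injective (Subtype.val_injective hab)
    rw [himg, Finset.card_image_of_injective _ hinj, cyc5_neighbor_card]
  have hcard3 : (G.neighborFinset v).card = 3 := hreg v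
  have hsplit := Finset.card_filter_add_card_filter_not
    (s := G.neighborFinset v) (p := (· ∈ S))
  have hcard1 : ((G.neighborFinset v).filter (fun u => ¬ u ∈ S)).card = 1 := by omega
  obtain ⟨w, hw⟩ := Finset.card_eq_one.mp hcard1
  refine ⟨w, ?_, ?_⟩
  · have : w ∈ (G.neighborFinset v).filter (fun u => ¬ u ∈ S) := by
      rw [hw]; exact Finset.mem_singleton_self w
    rw [Finset.mem_filter, SimpleGraph.mem_neighborFinset] at this
    exact ⟨this.1, this.2⟩
  · rintro u ⟨hu1, hu2⟩
    have : u ∈ (G.neighborFinset v).filter (fun u => ¬ u ∈ S) := by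
      rw [Finset.mem_filter, SimpleGraph.mem_neighborFinset]; exact ⟨hu1, hu2⟩
    rw [hw, Finset.mem_singleton] at this
    exact this

/-- a 3-regular graph on 10 vertices with 15 edges, having a cut
`C = δ(X)` with `|X| = |X̄| = 5`, both sides inducing 5-cycles, `|C| = 5`, and no
4-cycle meeting `C` in exactly two edges, is the Petersen graph. -/
theorem stmt2 (G : SimpleGraph V) [DecidableRel G.Adj]
    (hcard : Fintype.card V = 10) (hreg : ∀ v : V, G.degree v = 3)
    (hedges : G.edgeFinset.card = 15) (X : Set V)
    (hX : X.toFinset.card = 5) (hXc : Xᶜ.toFinset.card = 5)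
    (hC5X : Nonempty (G.induce X ≃g SimpleGraph.cycleGraph 5))
    (hC5Xc : Nonempty (G.induce Xᶜ ≃g SimpleGraph.cycleGraph 5))
    (hcut : (cutE G X).card = 5)
    (h4 : ¬ ∃ a b c d : V, a ≠ b ∧ a ≠ c ∧ a ≠ d ∧ b ≠ c ∧ b ≠ d ∧ c ≠ d ∧
      G.Adj a b ∧ G.Adj b c ∧ G.Adj c d ∧ G.Adj d a ∧
      (({s(a, b), s(b, c), s(c, d), s(d, a)} : Finset (Sym2 V)) ∩ cutE G X).card = 2) :
    Nonempty (G ≃g petersenGraph) := by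
  classical
  obtain ⟨φ⟩ := hC5X
  obtain ⟨ψ⟩ := hC5Xc
  -- unique mates across the cut
  have hmateX : ∀ x : ↥X, ∃! w, G.Adj x w ∧ w ∉ X := fun x => unique_mate G X hreg φ x x.2
  have hmateY : ∀ y : ↥Xᶜ, ∃! w, G.Adj y w ∧ w ∉ Xᶜ := fun y => unique_mate G Xᶜ hreg ψ y y.2
  let μ : ↥X → ↥Xᶜ := fun x => ⟨(hmateX x).choose, (hmateX x).choose_spec.1.2⟩
  let ν : ↥Xᶜ → ↥X := fun y => ⟨(hmateY y).choose,
    Set.notMem_compl_iff.mp (hmateY y).choose_spec.1.2⟩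
  have hμadj : ∀ x : ↥X, G.Adj x (μ x) := fun x => (hmateX x).choose_spec.1.1
  have hνadj : ∀ y : ↥Xᶜ, G.Adj y (ν y) := fun y => (hmateY y).choose_spec.1.1
  have hμuniq : ∀ (x : ↥X) (w : V), G.Adj x w → w ∉ X → w = (μ x : V) :=
    fun x w hw hw' => (hmateX x).choose_spec.2 w ⟨hw, hw'⟩
  have hνuniq : ∀ (y : ↥Xᶜ) (w : V), G.Adj y w → w ∉ Xᶜ → w = (ν y : V) :=
    fun y w hw hw' => (hmateY y).choose_spec.2 w ⟨hw, hw'⟩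
  have hνμ : ∀ x, ν (μ x) = x := fun x =>
    Subtype.ext ((hνuniq (μ x) x ((hμadj x).symm) (fun h => h x.2)).symm)
  have hμν : ∀ y, μ (ν y) = y := fun y =>
    Subtype.ext ((hμuniq (ν y) y ((hνadj y).symm) (fun h => y.2 h)).symm)
  let μE : ↥X ≃ ↥Xᶜ := ⟨μ, ν, hνμ, hμν⟩
  let σ : Equiv.Perm (Fin 5) := φ.toEquiv.symm.trans (μE.trans ψ.toEquiv)
  have hσ : ∀ i : Fin 5, σ i = ψ (μ (φ.toEquiv.symm i)) := fun i => rfl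
  have hid : ∀ x : ↥X, φ.toEquiv.symm (φ x) = x := fun x => φ.toEquiv.symm_apply_apply x
  have hid' : ∀ j : Fin 5, φ (φ.toEquiv.symm j) = j := fun j => φ.toEquiv.apply_symm_apply j
  -- adjacency transfer
  have hXadj : ∀ a b : ↥X, G.Adj a b ↔ cAdj (φ a) (φ b) := by
    intro a b
    rw [← cyc5_adj, φ.map_adj_iff]
    exact Iff.rfl
  have hYadj : ∀ a b : ↥Xᶜ, G.Adj a b ↔ cAdj (ψ a) (ψ b) := by
    intro a b
    rw [← cyc5_adj, ψ.map_adj_iff]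
    exact Iff.rfl
  have hcross : ∀ (a : ↥X) (b : ↥Xᶜ), G.Adj a b ↔ μ a = b := by
    intro a b
    constructor
    · intro hab
      exact Subtype.ext ((hμuniq a b hab b.2).symm)
    · rintro rfl
      exact hμadj a
  -- the combinatorial condition
  have hcond : cond σ := by
    intro i hcad
    apply h4
    set xa : ↥X := φ.toEquiv.symm i with hxa
    set xb : ↥X := φ.toEquiv.symm (i + 1) with hxb
    have hii : (i : Fin 5) ≠ i + 1 := fun h2 =>
      (by decide : (1 : Fin 5) ≠ 0) (left_eq_add.mp h2)
    have hne : xa ≠ xb := fun h => hii (φ.toEquiv.symm.injective h)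
    have adj_ab : G.Adj xa xb := by
      refine (hXadj xa xb).mpr ?_
      rw [hxa, hxb, hid', hid']
      exact Or.inr (add_sub_cancel_left i 1)
    have adj_bc : G.Adj xb (μ xb) := hμadj xb
    have adj_cd : G.Adj (μ xb) (μ xa) := by
      refine (hYadj (μ xb) (μ xa)).mpr ?_
      have e1 : (ψ (μ xb) : Fin 5) = σ (i + 1) := (hσ (i + 1)).symm
      have e2 : (ψ (μ xa) : Fin 5) = σ i := (hσ i).symm
      rw [e1, e2]
      rcases hcad with h | h
      · exact Or.inr h
      · exact Or.inl h
    have adj_da : G.Adj (μ xa) xa := (hμadj xa).symm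
    have hmemC : ∀ z : ↥Xᶜ, (z : V) ∉ X := fun z => z.2
    have hmemX : ∀ z : ↥X, (z : V) ∈ X := fun z => z.2
    -- cut membership facts
    have he2 : s((xb : V), (μ xb : V)) ∈ cutE G X := by
      refine mem_cutE.mpr ⟨G.mem_edgeSet.mpr adj_bc, xb, μ xb, rfl, hmemX xb, hmemC (μ xb)⟩
    have he4 : s((μ xa : V), (xa : V)) ∈ cutE G X := by
      refine mem_cutE.mpr ⟨G.mem_edgeSet.mpr adj_da, xa, μ xa, Sym2.eq_swap, hmemX xa, hmemC (μ xa)⟩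
    have he1 : s((xa : V), (xb : V)) ∉ cutE G X := by
      rintro h
      obtain ⟨-, u, w, huw, hu, hw⟩ := mem_cutE.mp h
      rcases Sym2.eq_iff.mp huw with ⟨rfl, rfl⟩ | ⟨rfl, rfl⟩
      · exact hw (hmemX xb)
      · exact hw (hmemX xa)
    have he3 : s((μ xb : V), (μ xa : V)) ∉ cutE G X := by
      rintro h
      obtain ⟨-, u, w, huw, hu, hw⟩ := mem_cutE.mp h
      rcases Sym2.eq_iff.mp huw with ⟨rfl, rfl⟩ | ⟨rfl, rfl⟩
      · exact hmemC (μ xb) hu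
      · exact hmemC (μ xa) hu
    have hne24 : s((xb : V), (μ xb : V)) ≠ s((μ xa : V), (xa : V)) := by
      intro h
      rcases Sym2.eq_iff.mp h with ⟨h1, h2⟩ | ⟨h1, h2⟩
      · have := hmemX xb
        rw [h1] at this
        exact hmemC (μ xa) this
      · exact hne (Subtype.val_injective h1).symm
    refine ⟨xa, xb, μ xb, μ xa,
      fun h => hne (Subtype.val_injective h),
      ?_, ?_, ?_, ?_,
      fun h => hne (μE.injective (Subtype.val_injective h)).symm,
      adj_ab, adj_bc, adj_cd, adj_da, ?_⟩
    · intro h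
      have := hmemX xa
      rw [h] at this
      exact hmemC (μ xb) this
    · intro h
      have := hmemX xa
      rw [h] at this
      exact hmemC (μ xa) this
    · intro h
      have := hmemX xb
      rw [h] at this
      exact hmemC (μ xb) this
    · intro h
      have := hmemX xb
      rw [h] at this
      exact hmemC (μ xa) this
    have hset : ({s((xa : V), (xb : V)), s((xb : V), (μ xb : V)), s((μ xb : V), (μ xa : V)),
        s((μ xa : V), (xa : V))} : Finset (Sym2 V)) ∩ cutE G X
        = {s((xb : V), (μ xb : V)), s((μ xa : V), (xa : V))} := by
      ext e
      simp only [Finset.mem_inter, Finset.mem_insert, Finset.mem_singleton]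
      constructor
      · rintro ⟨(rfl | rfl | rfl | rfl), he⟩
        · exact absurd he he1
        · exact Or.inl rfl
        · exact absurd he he3
        · exact Or.inr rfl
      · rintro (rfl | rfl)
        · exact ⟨Or.inr (Or.inl rfl), he2⟩
        · exact ⟨Or.inr (Or.inr (Or.inr rfl)), he4⟩
    rw [hset]
    exact Finset.card_pair hne24
  -- the vertex identification
  let ψfun : V → Fin 5 ⊕ Fin 5 := fun v =>
    if h : v ∈ X then .inl (φ ⟨v, h⟩) else .inr (ψ ⟨v, h⟩)
  have hψfun_inj : Function.Injective ψfun := by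
    intro a b hab
    by_cases ha : a ∈ X <;> by_cases hb : b ∈ X <;>
      simp only [ψfun, dif_pos, dif_neg, ha, hb] at hab
    · exact congrArg Subtype.val (φ.toEquiv.injective (Sum.inl.inj hab))
    · exact absurd hab (by simp)
    · exact absurd hab (by simp)
    · exact congrArg Subtype.val (ψ.toEquiv.injective (Sum.inr.inj hab))
  have hadj_main : ∀ u v : V, G.Adj u v ↔ Hadj σ (ψfun u) (ψfun v) := by
    intro u v
    by_cases hu : u ∈ X <;> by_cases hv : v ∈ X <;>
      simp only [ψfun, dif_pos, dif_neg, hu, hv]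
    · exact (hXadj ⟨u, hu⟩ ⟨v, hv⟩).trans (Iff.rfl)
    · show G.Adj u v ↔ σ (φ ⟨u, hu⟩) = ψ ⟨v, hv⟩
      rw [hσ, hid]
      constructor
      · intro h
        exact congrArg ψ ((hcross ⟨u, hu⟩ ⟨v, hv⟩).mp h)
      · intro h
        exact (hcross ⟨u, hu⟩ ⟨v, hv⟩).mpr (ψ.toEquiv.injective h)
    · show G.Adj u v ↔ σ (φ ⟨v, hv⟩) = ψ ⟨u, hu⟩
      rw [hσ, hid]
      constructor
      · intro h
        exact congrArg ψ ((hcross ⟨v, hv⟩ ⟨u, hu⟩).mp h.symm)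
      · intro h
        exact ((hcross ⟨v, hv⟩ ⟨u, hu⟩).mpr (ψ.toEquiv.injective h)).symm
    · exact (hYadj ⟨u, hu⟩ ⟨v, hv⟩).trans (Iff.rfl)
  -- assembling the isomorphism
  let Ψ : V → {s : Finset (Fin 5) // s.card = 2} := fun v => Fmap σ (ψfun v)
  have hΨinj : Function.Injective Ψ := (keyInj σ hcond).comp hψfun_inj
  have hΨbij : Function.Bijective Ψ := by
    rw [Fintype.bijective_iff_injective_and_card]
    exact ⟨hΨinj, by rw [hcard, card_petersen_vertices]⟩
  refine ⟨⟨Equiv.ofBijective Ψ hΨbij, ?_⟩⟩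
  intro a b
  show petersenGraph.Adj (Fmap σ (ψfun a)) (Fmap σ (ψfun b)) ↔ G.Adj a b
  have : petersenGraph.Adj (Fmap σ (ψfun a)) (Fmap σ (ψfun b)) ↔
      Disjoint (Fmap σ (ψfun a)).1 (Fmap σ (ψfun b)).1 := Iff.rfl
  rw [this, ← keyAdj σ hcond]
  exact (hadj_main a b).symm



end PaperPM
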